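/- Let B be an N×D real matrix, τv, τy > 0, with BᵀB = Q Λ Qᵀ, Q orthogonal, Λ diagonal nonnegative. Set Σv = τv·I_D and Σy = τy·I_N, and assume E := B Σv Bᵀ + Σy is invertible. Then Σv Bᵀ E⁻¹ = (τv/τy)·(Bᵀ − (1/τy)·Q Λ ((1/τv)·I + (1/τy)·Λ)⁻¹ Qᵀ Bᵀ). -/
import Mathlib


open Matrix

/-- Theorem 2 (mean/gain formula): with `Σv = τv I`, `Σy = τy I` and
`BᵀB = Q Λ Qᵀ`,
`Σv Bᵀ E⁻¹ = (τv/τy)(Bᵀ − (1/τy) Q Λ ((1/τv)I + (1/τy)Λ)⁻¹ Qᵀ Bᵀ)`. -/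
theorem gain_matrix_eig {N D : ℕ} (B : Matrix (Fin N) (Fin D) ℝ)
    (τv τy : ℝ) (hv : 0 < τv) (hy : 0 < τy)
    (Q : Matrix (Fin D) (Fin D) ℝ) (hQ : Qᵀ * Q = 1)
    (l : Fin D → ℝ) (hl : ∀ i, 0 ≤ l i)
    (hBB : Bᵀ * B = Q * Matrix.diagonal l * Qᵀ)
    (hE : IsUnit (B * (τv • (1 : Matrix (Fin D) (Fin D) ℝ)) * Bᵀ
        + τy • (1 : Matrix (Fin N) (Fin N) ℝ)).det) :
    (τv • (1 : Matrix (Fin D) (Fin D) ℝ)) * Bᵀ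
        * (B * (τv • (1 : Matrix (Fin D) (Fin D) ℝ)) * Bᵀ
            + τy • (1 : Matrix (Fin N) (Fin N) ℝ))⁻¹
      = (τv / τy) • (Bᵀ - (1 / τy) •
          (Q * Matrix.diagonal l
            * ((1 / τv) • (1 : Matrix (Fin D) (Fin D) ℝ)
                + (1 / τy) • Matrix.diagonal l)⁻¹ * Qᵀ * Bᵀ)) := by
  set M : Matrix (Fin D) (Fin D) ℝ := Matrix.diagonal l with hM
  set S : Matrix (Fin D) (Fin D) ℝ :=
    (1 / τv) • (1 : Matrix (Fin D) (Fin D) ℝ) + (1 / τy) • M with hSdef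
  set E : Matrix (Fin N) (Fin N) ℝ :=
    B * (τv • (1 : Matrix (Fin D) (Fin D) ℝ)) * Bᵀ
      + τy • (1 : Matrix (Fin N) (Fin N) ℝ) with hEdef
  set R : Matrix (Fin D) (Fin N) ℝ :=
    (τv / τy) • (Bᵀ - (1 / τy) • (Q * M * S⁻¹ * Qᵀ * Bᵀ)) with hRdef
  -- S is a diagonal matrix with positive entries
  have hSdiag : S = Matrix.diagonal (fun i => 1 / τv + (1 / τy) * l i) := by
    rw [hSdef, hM]
    ext i j
    by_cases h : i = j <;>
      simp [Matrix.diagonal, Matrix.one_apply, h, mul_comm]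
  have hSdet : IsUnit S.det := by
    rw [hSdiag, Matrix.det_diagonal]
    refine (Finset.prod_ne_zero_iff.2 fun i _ => ?_).isUnit
    have : 0 < 1 / τv + (1 / τy) * l i :=
      add_pos_of_pos_of_nonneg (by positivity)
        (mul_nonneg (by positivity) (hl i))
    exact ne_of_gt this
  have hSinvS : S⁻¹ * S = 1 := Matrix.nonsing_inv_mul S hSdet
  have hQQ : Q * Qᵀ = 1 := mul_eq_one_comm.mp hQ
  -- key identity: τv • S = 1 + (τv / τy) • M
  have hτvS : τv • S = 1 + (τv / τy) • M := by
    rw [hSdef, smul_add, smul_smul, smul_smul]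
    rw [mul_one_div, div_self (ne_of_gt hv), mul_one_div]
    simp
  -- key: M * S⁻¹ * (1 + (τv/τy) • M) = τv • M
  have hkey : M * S⁻¹ * (1 + (τv / τy) • M) = τv • M := by
    rw [← hτvS, mul_smul_comm, mul_assoc, hSinvS, mul_one]
  -- main: R * E = τv • Bᵀ
  have hmain : R * E = (τv • (1 : Matrix (Fin D) (Fin D) ℝ)) * Bᵀ := by
    have hBBt : Bᵀ * (B * Bᵀ) = Q * (M * (Qᵀ * Bᵀ)) := by
      rw [← Matrix.mul_assoc, hBB]
      simp [Matrix.mul_assoc]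
    have hQBB : Qᵀ * Bᵀ * (B * Bᵀ) = M * (Qᵀ * Bᵀ) := by
      rw [Matrix.mul_assoc, hBBt, ← Matrix.mul_assoc, hQ, Matrix.one_mul]
    rw [hRdef, hEdef]
    rw [Matrix.smul_mul, Matrix.sub_mul, Matrix.smul_mul]
    rw [Matrix.mul_add, Matrix.mul_add]
    have e1 : Bᵀ * (B * (τv • (1 : Matrix (Fin D) (Fin D) ℝ)) * Bᵀ)
        = τv • (Q * (M * (Qᵀ * Bᵀ))) := by
      rw [Matrix.mul_smul, Matrix.mul_one, Matrix.smul_mul, Matrix.mul_smul, hBBt]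
    have e2 : Q * M * S⁻¹ * Qᵀ * Bᵀ * (B * (τv • (1 : Matrix (Fin D) (Fin D) ℝ)) * Bᵀ)
        = τv • (Q * M * S⁻¹ * (M * (Qᵀ * Bᵀ))) := by
      rw [Matrix.mul_smul, Matrix.mul_one, Matrix.smul_mul, Matrix.mul_smul]
      congr 1
      rw [Matrix.mul_assoc (Q * M * S⁻¹) Qᵀ Bᵀ, Matrix.mul_assoc (Q * M * S⁻¹) (Qᵀ * Bᵀ)]
      rw [hQBB]
    have hkey' : M * S⁻¹ + (τv / τy) • (M * S⁻¹ * M) = τv • M := by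
      rw [← hkey, Matrix.mul_add, Matrix.mul_one, Matrix.mul_smul]
    have hCD : (τv / τy) • (Q * M * S⁻¹ * (M * (Qᵀ * Bᵀ)))
        + Q * M * S⁻¹ * (Qᵀ * Bᵀ)
        = τv • (Q * (M * (Qᵀ * Bᵀ))) := by
      have h2 := congrArg (fun Z => Q * Z * (Qᵀ * Bᵀ)) hkey'
      simp only [Matrix.add_mul, Matrix.mul_add, Matrix.smul_mul, Matrix.mul_smul,
        Matrix.mul_assoc] at h2 ⊢
      rw [add_comm]
      exact h2
    rw [e1, e2, Matrix.mul_smul, Matrix.mul_smul, Matrix.mul_one, Matrix.mul_one]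
    rw [smul_add, smul_smul, smul_smul]
    have c1 : 1 / τy * τv = τv / τy := by ring
    have c2 : 1 / τy * τy = 1 := by field_simp
    simp only [Matrix.mul_assoc] at hCD ⊢
    rw [c1, c2, one_smul, hCD, add_sub_cancel_left, smul_smul]
    rw [Matrix.smul_mul, Matrix.one_mul]
    congr 1
    field_simp
  have hEinv : E * E⁻¹ = 1 := Matrix.mul_nonsing_inv E hE
  calc (τv • (1 : Matrix (Fin D) (Fin D) ℝ)) * Bᵀ * E⁻¹
      = R * E * E⁻¹ := by rw [hmain]
    _ = R * (E * E⁻¹) := Matrix.mul_assoc _ _ _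
    _ = R := by rw [hEinv, Matrix.mul_one]
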